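/- (Snail lemma in an abelian category.) Let A be an abelian category. Given arrows x : X → X₀, y : Y → Y₀, g : X → Y, g₀ : X₀ → Y₀ with g·y = x·g₀, let P = X₀ ×_{g₀,y} Y be the pullback of g₀ and y, with projections y' : P → X₀ and g₀' : P → Y, and let ⟨x,g⟩ : X → P be the induced arrow. Then the snail sequence Ker⟨x,g⟩ → Ker(x) → Ker(y) →^{δ₀} Cok⟨x,g⟩ → Cok(x) → Cok(y), where the first arrow is induced by id_X over y', the second by g, δ₀ = ⟨0, k_y⟩·c_{⟨x,g⟩} (with k_y : Ker(y) → Y the kernel arrow and c_{⟨x,g⟩} the cokernel projection of ⟨x,g⟩), the fourth arrow is induced by y' : P → X₀, and the fifth by g₀, is exact at Ker(x), at Ker(y), at Cok⟨x,g⟩, and at Cok(x). -/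

import Mathlib

open CategoryTheory CategoryTheory.Limits

noncomputable section

universe v u

variable {A : Type u} [Category.{v} A] [Abelian A]
variable {X X₀ Y Y₀ : A}

/-- The comparison `⟨x, g⟩ : X ⟶ X₀ ×_{g₀,y} Y` into the pullback of `g₀` and `y`. -/
def snailLift (x : X ⟶ X₀) (y : Y ⟶ Y₀) (g : X ⟶ Y) (g₀ : X₀ ⟶ Y₀)
    (sq : g ≫ y = x ≫ g₀) : X ⟶ pullback g₀ y :=
  pullback.lift x g sq.symm

/-- `Ker⟨x,g⟩ ⟶ Ker(x)`, induced by `id_X` over the pullback projection `y'`. -/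
def snailK1 (x : X ⟶ X₀) (y : Y ⟶ Y₀) (g : X ⟶ Y) (g₀ : X₀ ⟶ Y₀)
    (sq : g ≫ y = x ≫ g₀) : kernel (snailLift x y g g₀ sq) ⟶ kernel x :=
  kernel.map (snailLift x y g g₀ sq) x (𝟙 X) (pullback.fst g₀ y) (by simp [snailLift]; exact pullback.lift_fst _ _ _)

/-- `Ker(x) ⟶ Ker(y)`, induced by `g` over `g₀`. -/
def snailK2 (x : X ⟶ X₀) (y : Y ⟶ Y₀) (g : X ⟶ Y) (g₀ : X₀ ⟶ Y₀)
    (sq : g ≫ y = x ≫ g₀) : kernel x ⟶ kernel y :=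
  kernel.map x y g g₀ sq.symm

/-- The connecting arrow `δ₀ = ⟨0, k_y⟩ ≫ c_{⟨x,g⟩} : Ker(y) ⟶ Cok⟨x,g⟩`. -/
def snailDelta (x : X ⟶ X₀) (y : Y ⟶ Y₀) (g : X ⟶ Y) (g₀ : X₀ ⟶ Y₀)
    (sq : g ≫ y = x ≫ g₀) : kernel y ⟶ cokernel (snailLift x y g g₀ sq) :=
  pullback.lift 0 (kernel.ι y) (by simp) ≫ cokernel.π (snailLift x y g g₀ sq)

/-- `Cok⟨x,g⟩ ⟶ Cok(x)`, induced by the pullback projection `y'`. -/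
def snailC1 (x : X ⟶ X₀) (y : Y ⟶ Y₀) (g : X ⟶ Y) (g₀ : X₀ ⟶ Y₀)
    (sq : g ≫ y = x ≫ g₀) : cokernel (snailLift x y g g₀ sq) ⟶ cokernel x :=
  cokernel.map (snailLift x y g g₀ sq) x (𝟙 X) (pullback.fst g₀ y) (by simp [snailLift]; exact pullback.lift_fst _ _ _)

/-- `Cok(x) ⟶ Cok(y)`, induced by `g` over `g₀`. -/
def snailC2 (x : X ⟶ X₀) (y : Y ⟶ Y₀) (g : X ⟶ Y) (g₀ : X₀ ⟶ Y₀)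
    (sq : g ≫ y = x ≫ g₀) : cokernel x ⟶ cokernel y :=
  cokernel.map x y g g₀ sq.symm

open CategoryTheory.Abelian CategoryTheory.Abelian.Pseudoelement in
private theorem snail_aux (x : X ⟶ X₀) (y : Y ⟶ Y₀) (g : X ⟶ Y) (g₀ : X₀ ⟶ Y₀)
    (L : X ⟶ pullback g₀ y)
    (hLf : L ≫ pullback.fst g₀ y = x) (hLs : L ≫ pullback.snd g₀ y = g)
    (e : kernel y ⟶ pullback g₀ y)
    (hef : e ≫ pullback.fst g₀ y = 0) (hes : e ≫ pullback.snd g₀ y = kernel.ι y)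
    (K1 : kernel L ⟶ kernel x) (hK1ι : K1 ≫ kernel.ι x = kernel.ι L)
    (K2 : kernel x ⟶ kernel y) (hK2ι : K2 ≫ kernel.ι y = kernel.ι x ≫ g)
    (D : kernel y ⟶ cokernel L) (hδ : D = e ≫ cokernel.π L)
    (C1 : cokernel L ⟶ cokernel x) (hC1 : cokernel.π L ≫ C1 = pullback.fst g₀ y ≫ cokernel.π x)
    (C2 : cokernel x ⟶ cokernel y) (hC2 : cokernel.π x ≫ C2 = g₀ ≫ cokernel.π y) :
    (∃ w : K1 ≫ K2 = 0, (ShortComplex.mk _ _ w).Exact) ∧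
    (∃ w : K2 ≫ D = 0, (ShortComplex.mk _ _ w).Exact) ∧
    (∃ w : D ≫ C1 = 0, (ShortComplex.mk _ _ w).Exact) ∧
    (∃ w : C1 ≫ C2 = 0, (ShortComplex.mk _ _ w).Exact) := by
  -- joint injectivity of pullback projections on pseudoelements
  have jointMono : ∀ z : Pseudoelement (pullback g₀ y),
      pseudoApply (pullback.fst g₀ y) z = 0 → pseudoApply (pullback.snd g₀ y) z = 0 → z = 0 := by
    intro z
    refine Quotient.inductionOn z fun t h1 h2 => ?_
    rw [pseudoApply_mk'] at h1 h2
    have h1' := (pseudoZero_iff (_ : Over X₀)).1 h1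
    have h2' := (pseudoZero_iff (_ : Over Y)).1 h2
    have ht : t.hom = 0 := by
      apply pullback.hom_ext <;> simpa using (by assumption : _)
    · exact (pseudoZero_iff t).2 ht
  -- every pseudoelement of the pullback killed by `fst` comes from `kernel y` via `e`
  have factorE : ∀ z : Pseudoelement (pullback g₀ y),
      pseudoApply (pullback.fst g₀ y) z = 0 → ∃ c : Pseudoelement (kernel y),
        pseudoApply e c = z := by
    intro z
    refine Quotient.inductionOn z fun t h1 => ?_
    rw [pseudoApply_mk'] at h1
    have h1' : t.hom ≫ pullback.fst g₀ y = 0 := by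
      simpa using (pseudoZero_iff (_ : Over X₀)).1 h1
    have hsy : (t.hom ≫ pullback.snd g₀ y) ≫ y = 0 := by
      rw [Category.assoc, ← pullback.condition, ← Category.assoc, h1', zero_comp]
    refine ⟨⟦Over.mk (kernel.lift y (t.hom ≫ pullback.snd g₀ y) hsy)⟧, ?_⟩
    rw [pseudoApply_mk']
    apply Quotient.sound
    have hcomp : kernel.lift y (t.hom ≫ pullback.snd g₀ y) hsy ≫ e = t.hom := by
      apply pullback.hom_ext
      · rw [Category.assoc, hef, comp_zero, h1']
      · rw [Category.assoc, hes, kernel.lift_ι]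
    exact ⟨t.left, 𝟙 _, 𝟙 _, inferInstance, inferInstance, by simpa using hcomp⟩
  -- vanishing of composites
  have w1 : K1 ≫ K2 = 0 := by
    apply zero_of_comp_mono (kernel.ι y)
    rw [Category.assoc, hK2ι, ← Category.assoc, hK1ι, ← hLs, ← Category.assoc,
      kernel.condition, zero_comp]
  have hK2e : K2 ≫ e = kernel.ι x ≫ L := by
    apply pullback.hom_ext
    · rw [Category.assoc, hef, comp_zero, Category.assoc, hLf, kernel.condition]
    · rw [Category.assoc, hes, hK2ι, Category.assoc, hLs]
  have w2 : K2 ≫ D = 0 := by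
    rw [hδ, ← Category.assoc, hK2e, Category.assoc, cokernel.condition, comp_zero]
  have w3 : D ≫ C1 = 0 := by
    rw [hδ, Category.assoc, hC1, ← Category.assoc, hef, zero_comp]
  have w4 : C1 ≫ C2 = 0 := by
    rw [← cancel_epi (cokernel.π L), ← Category.assoc, hC1, Category.assoc, hC2,
      ← Category.assoc, pullback.condition, Category.assoc, cokernel.condition,
      comp_zero, comp_zero]
  -- pseudoelement exactness facts for kernels/cokernels
  have exκ : ∀ {W W' : A} (f : W ⟶ W') (b : Pseudoelement W), pseudoApply f b = 0 →
      ∃ a, pseudoApply (kernel.ι f) a = b :=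
    fun f => pseudo_exact_of_exact (ShortComplex.exact_kernel f)
  have exπ : ∀ {W W' : A} (f : W ⟶ W') (b : Pseudoelement W'),
      pseudoApply (cokernel.π f) b = 0 → ∃ a, pseudoApply f a = b :=
    fun f => pseudo_exact_of_exact (ShortComplex.exact_cokernel f)
  refine ⟨⟨w1, ?_⟩, ⟨w2, ?_⟩, ⟨w3, ?_⟩, ⟨w4, ?_⟩⟩
  · -- exactness at Ker x
    apply exact_of_pseudo_exact
    intro b hb
    dsimp only [ShortComplex.mk] at hb ⊢
    have hg0 : pseudoApply g (pseudoApply (kernel.ι x) b) = 0 := by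
      rw [← Pseudoelement.comp_apply, ← hK2ι, Pseudoelement.comp_apply, hb, apply_zero]
    have hx0 : pseudoApply x (pseudoApply (kernel.ι x) b) = 0 := by
      rw [← Pseudoelement.comp_apply, kernel.condition, Pseudoelement.zero_apply]
    have hL0 : pseudoApply L (pseudoApply (kernel.ι x) b) = 0 := by
      apply jointMono
      · rw [← Pseudoelement.comp_apply, hLf, hx0]
      · rw [← Pseudoelement.comp_apply, hLs, hg0]
    obtain ⟨c, hc⟩ := exκ L _ hL0
    refine ⟨c, pseudo_injective_of_mono (kernel.ι x) ?_⟩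
    rw [← Pseudoelement.comp_apply, hK1ι, hc]
  · -- exactness at Ker y
    apply exact_of_pseudo_exact
    intro b hb
    dsimp only [ShortComplex.mk] at hb ⊢
    have hb' : pseudoApply (cokernel.π L) (pseudoApply e b) = 0 := by
      rw [← Pseudoelement.comp_apply, ← hδ]; exact hb
    obtain ⟨a, ha⟩ := exπ L _ hb'
    have hx0 : pseudoApply x a = 0 := by
      rw [← hLf, Pseudoelement.comp_apply, ha, ← Pseudoelement.comp_apply, hef, Pseudoelement.zero_apply]
    have hga : pseudoApply g a = pseudoApply (kernel.ι y) b := by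
      rw [← hLs, Pseudoelement.comp_apply, ha, ← Pseudoelement.comp_apply, hes]
    obtain ⟨c, hc⟩ := exκ x a hx0
    refine ⟨c, pseudo_injective_of_mono (kernel.ι y) ?_⟩
    rw [← Pseudoelement.comp_apply, hK2ι, Pseudoelement.comp_apply, hc, hga]
  · -- exactness at Cok ⟨x,g⟩
    apply exact_of_pseudo_exact
    intro b hb
    dsimp only [ShortComplex.mk] at hb ⊢
    obtain ⟨p, hp⟩ := pseudo_surjective_of_epi (cokernel.π L) b
    have hfp : pseudoApply (cokernel.π x) (pseudoApply (pullback.fst g₀ y) p) = 0 := by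
      rw [← Pseudoelement.comp_apply, ← hC1, Pseudoelement.comp_apply, hp, hb]
    obtain ⟨a, ha⟩ := exπ x _ hfp
    have heq : pseudoApply (pullback.fst g₀ y) p =
        pseudoApply (pullback.fst g₀ y) (pseudoApply L a) := by
      rw [← Pseudoelement.comp_apply, hLf, ha]
    obtain ⟨z, hz0, hz⟩ := sub_of_eq_image (pullback.fst g₀ y) p (pseudoApply L a) heq
    have hπz : pseudoApply (cokernel.π L) z = b := by
      rw [hz _ (cokernel.π L) (by rw [← Pseudoelement.comp_apply, cokernel.condition, Pseudoelement.zero_apply]), hp]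
    obtain ⟨c, hc⟩ := factorE z hz0
    exact ⟨c, by rw [hδ, Pseudoelement.comp_apply, hc, hπz]⟩
  · -- exactness at Cok x
    apply exact_of_pseudo_exact
    intro b hb
    dsimp only [ShortComplex.mk] at hb ⊢
    obtain ⟨p, hp⟩ := pseudo_surjective_of_epi (cokernel.π x) b
    have h0 : pseudoApply (cokernel.π y) (pseudoApply g₀ p) = 0 := by
      rw [← Pseudoelement.comp_apply, ← hC2, Pseudoelement.comp_apply, hp, hb]
    obtain ⟨q, hq⟩ := exπ y _ h0
    obtain ⟨s, hs1, _⟩ := pseudo_pullback (p := p) (q := q) (by rw [hq])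
    refine ⟨pseudoApply (cokernel.π L) s, ?_⟩
    rw [← Pseudoelement.comp_apply, hC1, Pseudoelement.comp_apply, hs1, hp]


/-- **Statement 18** (The snail lemma in an abelian category).  Given a commutative square
`g ≫ y = x ≫ g₀`, the snail sequence
`Ker⟨x,g⟩ ⟶ Ker(x) ⟶ Ker(y) ⟶ Cok⟨x,g⟩ ⟶ Cok(x) ⟶ Cok(y)`
is exact at `Ker(x)`, `Ker(y)`, `Cok⟨x,g⟩` and `Cok(x)`. -/
theorem snail_lemma_abelian
    (x : X ⟶ X₀) (y : Y ⟶ Y₀) (g : X ⟶ Y) (g₀ : X₀ ⟶ Y₀)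
    (sq : g ≫ y = x ≫ g₀) :
    (∃ w : snailK1 x y g g₀ sq ≫ snailK2 x y g g₀ sq = 0, (ShortComplex.mk _ _ w).Exact) ∧
    (∃ w : snailK2 x y g g₀ sq ≫ snailDelta x y g g₀ sq = 0, (ShortComplex.mk _ _ w).Exact) ∧
    (∃ w : snailDelta x y g g₀ sq ≫ snailC1 x y g g₀ sq = 0, (ShortComplex.mk _ _ w).Exact) ∧
    (∃ w : snailC1 x y g g₀ sq ≫ snailC2 x y g g₀ sq = 0, (ShortComplex.mk _ _ w).Exact) :=
  snail_aux x y g g₀ _ (pullback.lift_fst _ _ _) (pullback.lift_snd _ _ _)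
    _ (pullback.lift_fst _ _ _) (pullback.lift_snd _ _ _)
    _ (by simp [snailK1, snailLift]) _ (by simp [snailK2]) _ rfl
    _ (by simp [snailC1, snailLift]) _ (by simp [snailC2])
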